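/- arXiv:2409.00581 — 4 statements merged into one kernel-verified Lean document; each statement's English description precedes it below -/
import Mathlib

section
/- Let n, k be natural numbers with k ≥ 1 and let H₁, H₂ be real n×k matrices with orthonormal columns (H₁ᵀH₁ = I_k and H₂ᵀH₂ = I_k). Suppose H₁ᵀH₂ = U·D·Vᵀ is a singular value decomposition: U and V are k×k orthogonal matrices (UᵀU = UUᵀ = I_k, VᵀV = VVᵀ = I_k) and D is diagonal with nonnegative nonincreasing diagonal entries s₁ ≥ s₂ ≥ ⋯ ≥ s_k ≥ 0. Let W₁ and W₂ be the subspaces of Euclidean space ℝ^n spanned by the columns of H₁ and H₂ respectively. Then for every index m ∈ {1, …, k}, the value s_m = D_{mm} is the greatest element (a maximum, attained) of the set { ⟨x, y⟩ : x ∈ W₁, y ∈ W₂, ‖x‖ = 1, ‖y‖ = 1, and for all j < m, ⟨x, (H₁U)_j⟩ = 0 and ⟨y, (H₂V)_j⟩ = 0 }, where (H₁U)_j and (H₂V)_j denote the j-th columns of H₁U and H₂V. In particular, the cosines of the principal angles between W₁ and W₂ are the singular values of H₁ᵀH₂, attained at the principal vectors given by the columns of H₁U and H₂V. -/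
open scoped RealInnerProductSpace
open Matrix

private lemma euclid_inner_dot {n : ℕ} (x y : EuclideanSpace ℝ (Fin n)) :
    ⟪x, y⟫ = (x : Fin n → ℝ) ⬝ᵥ (y : Fin n → ℝ) := by
  simp [PiLp.inner_apply, dotProduct, RCLike.inner_apply, conj_trivial, mul_comm]

private lemma mulVec_mem_span_cols {n k : ℕ} (A : Matrix (Fin n) (Fin k) ℝ) (c : Fin k → ℝ) :
    (WithLp.toLp 2 (fun i : Fin n => (A *ᵥ c) i) : EuclideanSpace ℝ (Fin n)) ∈
      Submodule.span ℝ (Set.range fun j : Fin k =>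
        (WithLp.toLp 2 (fun i : Fin n => A i j) : EuclideanSpace ℝ (Fin n))) := by
  have : (WithLp.toLp 2 (fun i : Fin n => (A *ᵥ c) i) : EuclideanSpace ℝ (Fin n))
      = ∑ j : Fin k, c j • (WithLp.toLp 2 (fun i : Fin n => A i j) : EuclideanSpace ℝ (Fin n)) := by
    ext i
    simp [Matrix.mulVec, dotProduct, Finset.sum_apply, mul_comm]
  rw [this]
  exact Submodule.sum_mem _ fun j _ =>
    Submodule.smul_mem _ _ (Submodule.subset_span ⟨j, rfl⟩)

private lemma norm_one_of_dot {n : ℕ} (x : EuclideanSpace ℝ (Fin n))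
    (h : (x : Fin n → ℝ) ⬝ᵥ (x : Fin n → ℝ) = 1) : ‖x‖ = 1 := by
  have h3 := real_inner_self_eq_norm_sq x
  rw [euclid_inner_dot, h] at h3
  nlinarith [norm_nonneg x]

private lemma mem_span_cols_mulVec {n k : ℕ} (A : Matrix (Fin n) (Fin k) ℝ)
    (x : EuclideanSpace ℝ (Fin n))
    (hx : x ∈ Submodule.span ℝ (Set.range fun j : Fin k =>
        (WithLp.toLp 2 (fun i : Fin n => A i j) : EuclideanSpace ℝ (Fin n)))) :
    ∃ c : Fin k → ℝ, ∀ i, x i = (A *ᵥ c) i := by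
  induction hx using Submodule.span_induction with
  | mem v hv =>
    obtain ⟨j, rfl⟩ := hv
    exact ⟨Pi.single j 1, fun i => by
      simp [Matrix.mulVec_single]⟩
  | zero => exact ⟨0, fun i => by simp⟩
  | add v w _ _ hv hw =>
    obtain ⟨c, hc⟩ := hv; obtain ⟨d, hd⟩ := hw
    exact ⟨c + d, fun i => by simp [Matrix.mulVec_add, hc i, hd i]⟩
  | smul r v _ hv =>
    obtain ⟨c, hc⟩ := hv
    exact ⟨r • c, fun i => by simp [Matrix.mulVec_smul, hc i]⟩

/-- The cosines of the principal angles between the column spans `W₁`, `W₂` of two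
matrices `H₁`, `H₂` with orthonormal columns are the singular values of `H₁ᵀH₂`:
for each `m`, the `m`-th singular value `D m m` is the maximum of `⟪x, y⟫` over unit
vectors `x ∈ W₁`, `y ∈ W₂` orthogonal to the previous principal vectors, which are
the columns of `H₁U` and `H₂V`. -/
theorem principal_angles_via_svd (n k : ℕ) (hk : 1 ≤ k)
    (H₁ H₂ : Matrix (Fin n) (Fin k) ℝ)
    (hH₁ : H₁ᵀ * H₁ = 1) (hH₂ : H₂ᵀ * H₂ = 1)
    (U D V : Matrix (Fin k) (Fin k) ℝ)
    (hU : Uᵀ * U = 1) (hU' : U * Uᵀ = 1)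
    (hV : Vᵀ * V = 1) (hV' : V * Vᵀ = 1)
    (hD : ∀ i j : Fin k, i ≠ j → D i j = 0)
    (hDnonneg : ∀ i : Fin k, 0 ≤ D i i)
    (hDmono : ∀ i j : Fin k, i ≤ j → D j j ≤ D i i)
    (hSVD : H₁ᵀ * H₂ = U * D * Vᵀ)
    (W₁ W₂ : Submodule ℝ (EuclideanSpace ℝ (Fin n)))
    (hW₁ : W₁ = Submodule.span ℝ (Set.range fun j : Fin k =>
      (WithLp.toLp 2 (fun i : Fin n => H₁ i j) : EuclideanSpace ℝ (Fin n))))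
    (hW₂ : W₂ = Submodule.span ℝ (Set.range fun j : Fin k =>
      (WithLp.toLp 2 (fun i : Fin n => H₂ i j) : EuclideanSpace ℝ (Fin n))))
    (m : Fin k) :
    IsGreatest
      {r : ℝ | ∃ x y : EuclideanSpace ℝ (Fin n),
        x ∈ W₁ ∧ y ∈ W₂ ∧ ‖x‖ = 1 ∧ ‖y‖ = 1 ∧
        (∀ j : Fin k, j < m →
          ⟪x, (WithLp.toLp 2 (fun i : Fin n => (H₁ * U) i j) : EuclideanSpace ℝ (Fin n))⟫ = 0 ∧
          ⟪y, (WithLp.toLp 2 (fun i : Fin n => (H₂ * V) i j) : EuclideanSpace ℝ (Fin n))⟫ = 0) ∧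
        r = ⟪x, y⟫}
      (D m m) := by
  set P := H₁ * U with hPdef
  set Q := H₂ * V with hQdef
  have hP : Pᵀ * P = 1 := by
    rw [hPdef, Matrix.transpose_mul, Matrix.mul_assoc, ← Matrix.mul_assoc H₁ᵀ, hH₁,
      Matrix.one_mul, hU]
  have hQ : Qᵀ * Q = 1 := by
    rw [hQdef, Matrix.transpose_mul, Matrix.mul_assoc, ← Matrix.mul_assoc H₂ᵀ, hH₂,
      Matrix.one_mul, hV]
  have hPQ : Pᵀ * Q = D := by
    rw [hPdef, hQdef, Matrix.transpose_mul, Matrix.mul_assoc, ← Matrix.mul_assoc H₁ᵀ, hSVD]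
    calc Uᵀ * (U * D * Vᵀ * V) = Uᵀ * (U * (D * (Vᵀ * V))) := by
          simp only [Matrix.mul_assoc]
      _ = D := by rw [hV, Matrix.mul_one, ← Matrix.mul_assoc, hU, Matrix.one_mul]
  -- dot products of mulVec
  have key : ∀ (a b : Fin k → ℝ), (P *ᵥ a) ⬝ᵥ (Q *ᵥ b) = ∑ j, a j * (D j j * b j) := by
    intro a b
    have h1 : a ⬝ᵥ ((Pᵀ * Q) *ᵥ b) = (P *ᵥ a) ⬝ᵥ (Q *ᵥ b) := by
      rw [← Matrix.mulVec_mulVec b Pᵀ Q, Matrix.dotProduct_mulVec a Pᵀ,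
        Matrix.vecMul_transpose]
    rw [← h1, hPQ]
    refine Finset.sum_congr rfl fun j _ => ?_
    congr 1
    rw [Matrix.mulVec, dotProduct]
    rw [Finset.sum_eq_single j (fun l _ hl => by rw [hD j l (Ne.symm hl), zero_mul])
      (by simp)]
  have keyPP : ∀ (a b : Fin k → ℝ), (P *ᵥ a) ⬝ᵥ (P *ᵥ b) = a ⬝ᵥ b := by
    intro a b
    have h1 : a ⬝ᵥ ((Pᵀ * P) *ᵥ b) = (P *ᵥ a) ⬝ᵥ (P *ᵥ b) := by
      rw [← Matrix.mulVec_mulVec b Pᵀ P, Matrix.dotProduct_mulVec a Pᵀ,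
        Matrix.vecMul_transpose]
    rw [← h1, hP, Matrix.one_mulVec]
  have keyQQ : ∀ (a b : Fin k → ℝ), (Q *ᵥ a) ⬝ᵥ (Q *ᵥ b) = a ⬝ᵥ b := by
    intro a b
    have h1 : a ⬝ᵥ ((Qᵀ * Q) *ᵥ b) = (Q *ᵥ a) ⬝ᵥ (Q *ᵥ b) := by
      rw [← Matrix.mulVec_mulVec b Qᵀ Q, Matrix.dotProduct_mulVec a Qᵀ,
        Matrix.vecMul_transpose]
    rw [← h1, hQ, Matrix.one_mulVec]
  have colP : ∀ j : Fin k, (fun i : Fin n => P i j) = P *ᵥ Pi.single j 1 := by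
    intro j; ext i; simp [Matrix.mulVec_single]
  have colQ : ∀ j : Fin k, (fun i : Fin n => Q i j) = Q *ᵥ Pi.single j 1 := by
    intro j; ext i; simp [Matrix.mulVec_single]
  constructor
  · -- membership: x = column m of P, y = column m of Q
    refine ⟨WithLp.toLp 2 (fun i : Fin n => P i m), WithLp.toLp 2 (fun i : Fin n => Q i m), ?_, ?_, ?_, ?_, ?_, ?_⟩
    · rw [hW₁]
      have hcol : (WithLp.toLp 2 (fun i : Fin n => P i m) : EuclideanSpace ℝ (Fin n))
          = (WithLp.toLp 2 (fun i : Fin n => (H₁ *ᵥ (fun j => U j m)) i) : EuclideanSpace ℝ (Fin n)) := by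
        congr 1
      rw [hcol]
      exact mulVec_mem_span_cols H₁ (fun j => U j m)
    · rw [hW₂]
      have hcol : (WithLp.toLp 2 (fun i : Fin n => Q i m) : EuclideanSpace ℝ (Fin n))
          = (WithLp.toLp 2 (fun i : Fin n => (H₂ *ᵥ (fun j => V j m)) i) : EuclideanSpace ℝ (Fin n)) := by
        congr 1
      rw [hcol]
      exact mulVec_mem_span_cols H₂ (fun j => V j m)
    · apply norm_one_of_dot
      show (fun i : Fin n => P i m) ⬝ᵥ (fun i : Fin n => P i m) = 1
      rw [colP, keyPP]
      simp [dotProduct, Pi.single_apply]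
    · apply norm_one_of_dot
      show (fun i : Fin n => Q i m) ⬝ᵥ (fun i : Fin n => Q i m) = 1
      rw [colQ, keyQQ]
      simp [dotProduct, Pi.single_apply]
    · intro j hj
      constructor
      · rw [euclid_inner_dot]; simp only [WithLp.ofLp_toLp]; rw [colP, colP, keyPP]
        simp [dotProduct, Pi.single_apply, (ne_of_lt hj : j ≠ m), Ne.symm (ne_of_lt hj)]
      · rw [euclid_inner_dot]; simp only [WithLp.ofLp_toLp]; rw [colQ, colQ, keyQQ]
        simp [dotProduct, Pi.single_apply, (ne_of_lt hj : j ≠ m), Ne.symm (ne_of_lt hj)]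
    · rw [euclid_inner_dot]; simp only [WithLp.ofLp_toLp]; rw [colP, colQ, key]
      simp [Pi.single_apply, hD]
  · -- upper bound
    rintro r ⟨x, y, hx, hy, hnx, hny, horth, rfl⟩
    rw [hW₁] at hx; rw [hW₂] at hy
    obtain ⟨c, hc⟩ := mem_span_cols_mulVec H₁ x hx
    obtain ⟨d, hd⟩ := mem_span_cols_mulVec H₂ y hy
    set a : Fin k → ℝ := Uᵀ *ᵥ c with ha
    set b : Fin k → ℝ := Vᵀ *ᵥ d with hb
    have hxP : ∀ i, x i = (P *ᵥ a) i := by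
      intro i
      rw [hc i, ha, Matrix.mulVec_mulVec, hPdef, Matrix.mul_assoc, hU', Matrix.mul_one]
    have hyQ : ∀ i, y i = (Q *ᵥ b) i := by
      intro i
      rw [hd i, hb, Matrix.mulVec_mulVec, hQdef, Matrix.mul_assoc, hV', Matrix.mul_one]
    have hxP' : (x : Fin n → ℝ) = P *ᵥ a := funext hxP
    have hyQ' : (y : Fin n → ℝ) = Q *ᵥ b := funext hyQ
    -- a j = 0 for j < m
    have haj : ∀ j : Fin k, j < m → a j = 0 := by
      intro j hj
      have := (horth j hj).1
      rw [euclid_inner_dot, WithLp.ofLp_toLp] at this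
      rw [hxP'] at this
      rw [show (fun i : Fin n => (H₁ * U) i j) = (fun i : Fin n => P i j) from rfl,
        colP, keyPP] at this
      simpa [dotProduct, Pi.single_apply] using this
    have hbj : ∀ j : Fin k, j < m → b j = 0 := by
      intro j hj
      have := (horth j hj).2
      rw [euclid_inner_dot, WithLp.ofLp_toLp] at this
      rw [hyQ'] at this
      rw [show (fun i : Fin n => (H₂ * V) i j) = (fun i : Fin n => Q i j) from rfl,
        colQ, keyQQ] at this
      simpa [dotProduct, Pi.single_apply] using this
    -- norms
    have hsa : ∑ j, a j ^ 2 = 1 := by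
      have h3 := real_inner_self_eq_norm_sq x
      rw [hnx, euclid_inner_dot, hxP', keyPP] at h3
      simpa [dotProduct, sq] using h3
    have hsb : ∑ j, b j ^ 2 = 1 := by
      have h3 := real_inner_self_eq_norm_sq y
      rw [hny, euclid_inner_dot, hyQ', keyQQ] at h3
      simpa [dotProduct, sq] using h3
    rw [euclid_inner_dot, hxP', hyQ', key]
    -- now bound ∑ j, a j * (D j j * b j) ≤ D m m
    have step1 : ∑ j, a j * (D j j * b j) ≤ ∑ j, D m m * (|a j| * |b j|) := by
      refine Finset.sum_le_sum fun j _ => ?_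
      by_cases hjm : j < m
      · have h0 : a j * (D j j * b j) = 0 := by rw [haj j hjm, zero_mul]
        rw [h0]
        exact mul_nonneg (hDnonneg m) (mul_nonneg (abs_nonneg _) (abs_nonneg _))
      · push_neg at hjm
        have hDj : D j j ≤ D m m := hDmono m j hjm
        calc a j * (D j j * b j) ≤ |a j * (D j j * b j)| := le_abs_self _
          _ = D j j * (|a j| * |b j|) := by
              rw [abs_mul, abs_mul, abs_of_nonneg (hDnonneg j)]; ring
          _ ≤ D m m * (|a j| * |b j|) := by
              apply mul_le_mul_of_nonneg_right hDj
              positivity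
    have cs : ∑ j, |a j| * |b j| ≤ 1 := by
      have h := Finset.sum_mul_sq_le_sq_mul_sq Finset.univ (fun j => |a j|) (fun j => |b j|)
      simp only [sq_abs] at h
      rw [hsa, hsb, mul_one] at h
      have hnn : 0 ≤ ∑ j, |a j| * |b j| :=
        Finset.sum_nonneg fun j _ => mul_nonneg (abs_nonneg _) (abs_nonneg _)
      nlinarith
    calc ∑ j, a j * (D j j * b j) ≤ ∑ j, D m m * (|a j| * |b j|) := step1
      _ = D m m * ∑ j, |a j| * |b j| := by rw [Finset.mul_sum]
      _ ≤ D m m * 1 := mul_le_mul_of_nonneg_left cs (hDnonneg m)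
      _ = D m m := mul_one _
end

section
/- Let n, k be natural numbers with k ≥ 1 and let H₁, H₂ be real n×k matrices with orthonormal columns (H₁ᵀH₁ = I_k and H₂ᵀH₂ = I_k). Let W₁ and W₂ be the subspaces of Euclidean space ℝ^n spanned by the columns of H₁ and H₂ respectively. Then the ℓ²-operator norm of the k×k matrix H₁ᵀH₂ is the greatest element (a maximum, attained) of the set { ⟨x, y⟩ : x ∈ W₁, y ∈ W₂, ‖x‖ = 1, ‖y‖ = 1 }. In other words, the cosine of the first (smallest) principal angle between W₁ and W₂ equals the largest singular value of H₁ᵀH₂. -/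
open scoped RealInnerProductSpace
open Matrix

private lemma inner_mulVec_aux (n k : ℕ) (A B : Matrix (Fin n) (Fin k) ℝ) (a b : Fin k → ℝ) :
    ⟪(WithLp.equiv 2 (Fin n → ℝ)).symm (A *ᵥ a),
      (WithLp.equiv 2 (Fin n → ℝ)).symm (B *ᵥ b)⟫ =
    ⟪(WithLp.equiv 2 (Fin k → ℝ)).symm a,
      (WithLp.equiv 2 (Fin k → ℝ)).symm ((Aᵀ * B) *ᵥ b)⟫ := by
  simp only [PiLp.inner_apply, RCLike.inner_apply, starRingEnd_apply, star_trivial,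
    WithLp.equiv_symm_apply, PiLp.toLp_apply]
  have h : (A *ᵥ a) ⬝ᵥ (B *ᵥ b) = a ⬝ᵥ ((Aᵀ * B) *ᵥ b) := by
    rw [dotProduct_mulVec, vecMul_mulVec, ← dotProduct_mulVec]
  simpa [dotProduct, mul_comm] using h

private lemma norm_mulVec_aux (n k : ℕ) (A : Matrix (Fin n) (Fin k) ℝ)
    (hA : Aᵀ * A = 1) (a : Fin k → ℝ) :
    ‖(WithLp.equiv 2 (Fin n → ℝ)).symm (A *ᵥ a)‖ =
      ‖(WithLp.equiv 2 (Fin k → ℝ)).symm a‖ := by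
  have h := inner_mulVec_aux n k A A a a
  rw [hA, Matrix.one_mulVec] at h
  have h1 := real_inner_self_eq_norm_sq ((WithLp.equiv 2 (Fin n → ℝ)).symm (A *ᵥ a))
  have h2 := real_inner_self_eq_norm_sq ((WithLp.equiv 2 (Fin k → ℝ)).symm a)
  rw [h, h2] at h1
  exact (sq_eq_sq₀ (norm_nonneg _) (norm_nonneg _)).mp h1.symm

private lemma mem_span_cols_aux (n k : ℕ) (A : Matrix (Fin n) (Fin k) ℝ)
    (x : EuclideanSpace ℝ (Fin n)) :
    x ∈ Submodule.span ℝ (Set.range fun j : Fin k =>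
        (WithLp.toLp 2 (fun i : Fin n => A i j) : EuclideanSpace ℝ (Fin n))) ↔
      ∃ a : Fin k → ℝ, x = (WithLp.equiv 2 (Fin n → ℝ)).symm (A *ᵥ a) := by
  rw [Submodule.mem_span_range_iff_exists_fun]
  constructor
  · rintro ⟨c, hc⟩
    refine ⟨c, ?_⟩
    rw [← hc]
    apply PiLp.ext
    intro i
    rw [WithLp.ofLp_sum, Finset.sum_apply i Finset.univ]
    simp [WithLp.equiv_symm_apply, PiLp.toLp_apply, Matrix.mulVec, dotProduct, mul_comm]
  · rintro ⟨a, rfl⟩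
    refine ⟨a, ?_⟩
    apply PiLp.ext
    intro i
    rw [WithLp.ofLp_sum, Finset.sum_apply i Finset.univ]
    simp [WithLp.equiv_symm_apply, PiLp.toLp_apply, Matrix.mulVec, dotProduct, mul_comm]

/-- The cosine of the first principal angle between the column spans of two matrices
`H₁`, `H₂` with orthonormal columns equals the largest singular value of `H₁ᵀH₂`,
i.e. the ℓ²-operator norm of `H₁ᵀH₂` is the maximum of `⟪x, y⟫` over unit vectors
`x ∈ W₁`, `y ∈ W₂`. -/
theorem first_principal_angle_eq_l2_opNorm (n k : ℕ) (hk : 1 ≤ k)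
    (H₁ H₂ : Matrix (Fin n) (Fin k) ℝ)
    (hH₁ : H₁ᵀ * H₁ = 1) (hH₂ : H₂ᵀ * H₂ = 1)
    (W₁ W₂ : Submodule ℝ (EuclideanSpace ℝ (Fin n)))
    (hW₁ : W₁ = Submodule.span ℝ (Set.range fun j : Fin k =>
      (WithLp.toLp 2 (fun i : Fin n => H₁ i j) : EuclideanSpace ℝ (Fin n))))
    (hW₂ : W₂ = Submodule.span ℝ (Set.range fun j : Fin k =>
      (WithLp.toLp 2 (fun i : Fin n => H₂ i j) : EuclideanSpace ℝ (Fin n)))) :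
    IsGreatest
      {r : ℝ | ∃ x y : EuclideanSpace ℝ (Fin n),
        x ∈ W₁ ∧ y ∈ W₂ ∧ ‖x‖ = 1 ∧ ‖y‖ = 1 ∧ r = ⟪x, y⟫}
      ‖Matrix.toEuclideanCLM (𝕜 := ℝ) (H₁ᵀ * H₂)‖ := by
  haveI : Nonempty (Fin k) := ⟨⟨0, hk⟩⟩
  set T := Matrix.toEuclideanCLM (𝕜 := ℝ) (H₁ᵀ * H₂) with hT
  have hTapp : ∀ b : EuclideanSpace ℝ (Fin k),
      T b = (WithLp.equiv 2 (Fin k → ℝ)).symm ((H₁ᵀ * H₂) *ᵥ (WithLp.equiv 2 (Fin k → ℝ)) b) :=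
    fun b => rfl
  constructor
  · -- membership: the norm is attained
    -- find b₀ maximizing ‖T b‖ on the unit sphere
    obtain ⟨b₀, hb₀mem, hmax⟩ :=
      (isCompact_sphere (0 : EuclideanSpace ℝ (Fin k)) 1).exists_isMaxOn
        (NormedSpace.sphere_nonempty.mpr zero_le_one)
        ((continuous_norm.comp T.continuous).continuousOn)
    have hb₀ : ‖b₀‖ = 1 := mem_sphere_zero_iff_norm.mp hb₀mem
    have hTnorm : ‖T‖ = ‖T b₀‖ := by
      refine le_antisymm ?_ ?_
      · refine T.opNorm_le_bound (norm_nonneg _) fun v => ?_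
        rcases eq_or_ne v 0 with rfl | hv
        · simp
        · have hvn : ‖v‖ ≠ 0 := norm_ne_zero_iff.mpr hv
          have hu : ‖(‖v‖⁻¹ • v)‖ = 1 := by
            rw [norm_smul, norm_inv, norm_norm, inv_mul_cancel₀ hvn]
          have hle : ‖T (‖v‖⁻¹ • v)‖ ≤ ‖T b₀‖ := hmax (mem_sphere_zero_iff_norm.mpr hu)
          rw [_root_.map_smul, norm_smul, norm_inv, norm_norm] at hle
          calc ‖T v‖ = ‖v‖ * (‖v‖⁻¹ * ‖T v‖) := by field_simp
            _ ≤ ‖v‖ * ‖T b₀‖ := by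
                exact mul_le_mul_of_nonneg_left hle (norm_nonneg _)
            _ = ‖T b₀‖ * ‖v‖ := mul_comm _ _
      · calc ‖T b₀‖ ≤ ‖T‖ * ‖b₀‖ := T.le_opNorm b₀
          _ = ‖T‖ := by rw [hb₀, mul_one]
    -- choose a₀ with ‖a₀‖ = 1 and ⟪a₀, T b₀⟫ = ‖T‖
    obtain ⟨a₀, ha₀, hinner⟩ :
        ∃ a₀ : EuclideanSpace ℝ (Fin k), ‖a₀‖ = 1 ∧ ⟪a₀, T b₀⟫ = ‖T‖ := by
      by_cases hz : T b₀ = 0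
      · refine ⟨EuclideanSpace.single ⟨0, hk⟩ (1 : ℝ), ?_, ?_⟩
        · simp [EuclideanSpace.norm_single]
        · rw [hz, inner_zero_right, hTnorm, hz, norm_zero]
      · have hn : ‖T b₀‖ ≠ 0 := norm_ne_zero_iff.mpr hz
        refine ⟨‖T b₀‖⁻¹ • T b₀, ?_, ?_⟩
        · rw [norm_smul, norm_inv, norm_norm, inv_mul_cancel₀ hn]
        · rw [real_inner_smul_left, real_inner_self_eq_norm_sq, hTnorm]
          field_simp [sq]
    -- translate back to x ∈ W₁, y ∈ W₂
    refine ⟨(WithLp.equiv 2 (Fin n → ℝ)).symm (H₁ *ᵥ (WithLp.equiv 2 (Fin k → ℝ)) a₀),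
      (WithLp.equiv 2 (Fin n → ℝ)).symm (H₂ *ᵥ (WithLp.equiv 2 (Fin k → ℝ)) b₀), ?_, ?_, ?_, ?_, ?_⟩
    · rw [hW₁, mem_span_cols_aux]; exact ⟨_, rfl⟩
    · rw [hW₂, mem_span_cols_aux]; exact ⟨_, rfl⟩
    · rw [norm_mulVec_aux n k H₁ hH₁]
      simpa using ha₀
    · rw [norm_mulVec_aux n k H₂ hH₂]
      simpa using hb₀
    · rw [inner_mulVec_aux]
      rw [← hinner, hTapp]
      congr 1
  · -- upper bound
    rintro r ⟨x, y, hx, hy, hxn, hyn, rfl⟩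
    rw [hW₁, mem_span_cols_aux] at hx
    rw [hW₂, mem_span_cols_aux] at hy
    obtain ⟨a, rfl⟩ := hx
    obtain ⟨b, rfl⟩ := hy
    rw [norm_mulVec_aux n k H₁ hH₁] at hxn
    rw [norm_mulVec_aux n k H₂ hH₂] at hyn
    rw [inner_mulVec_aux]
    have key : (WithLp.equiv 2 (Fin k → ℝ)).symm ((H₁ᵀ * H₂) *ᵥ b) =
        T ((WithLp.equiv 2 (Fin k → ℝ)).symm b) := by
      rw [hTapp]
      congr 1
    rw [key]
    calc ⟪(WithLp.equiv 2 (Fin k → ℝ)).symm a, T ((WithLp.equiv 2 (Fin k → ℝ)).symm b)⟫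
        ≤ ‖(WithLp.equiv 2 (Fin k → ℝ)).symm a‖ * ‖T ((WithLp.equiv 2 (Fin k → ℝ)).symm b)‖ :=
          real_inner_le_norm _ _
      _ ≤ 1 * (‖T‖ * ‖(WithLp.equiv 2 (Fin k → ℝ)).symm b‖) := by
          rw [hxn, one_mul, one_mul]
          exact T.le_opNorm _
      _ = ‖T‖ := by rw [hyn, mul_one, one_mul]
end

section
/- Let n, k be natural numbers, let H₁, H₂ be real n×k matrices with orthonormal columns (H₁ᵀH₁ = I_k and H₂ᵀH₂ = I_k), and suppose H₁ᵀH₂ = U·D·Vᵀ where U, D, V are k×k real matrices with UᵀU = I_k and VᵀV = I_k. Let W₁ be the subspace of Euclidean space ℝ^n spanned by the columns of H₁, with orthogonal projection P_{W₁}. Let w₁_off, w₂_off ∈ ℝ^n be offset vectors, let ḡ ∈ ℝ^k, and let the desired admissible trajectory of the guest system be w_g = (H₂V)·ḡ + w₂_off. Define w_h = (H₁UD)·ḡ + P_{W₁}(w₂_off − w₁_off) + w₁_off. Then w_h belongs to the host admissible behavior B₁ = w₁_off + W₁, and w_h minimizes the distance to w_g over B₁: for every z ∈ w₁_off + W₁,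 ‖w_g − w_h‖ ≤ ‖w_g − z‖. That is, w_h is the orthogonal projection of w_g onto B₁. -/
open Matrix Pointwise

/-- Similarity-based learning via projection: if the guest trajectory is
`w_g = (H₂V)·ḡ + w₂_off`, then `w_h = (H₁UD)·ḡ + P_{W₁}(w₂_off − w₁_off) + w₁_off`
belongs to the host admissible behavior `B₁ = w₁_off + W₁` and minimizes the
distance to `w_g` over `B₁`. -/
theorem similarity_based_learning (n k : ℕ)
    (H₁ H₂ : Matrix (Fin n) (Fin k) ℝ)
    (hH₁ : H₁ᵀ * H₁ = 1) (hH₂ : H₂ᵀ * H₂ = 1)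
    (U D V : Matrix (Fin k) (Fin k) ℝ)
    (hU : Uᵀ * U = 1) (hV : Vᵀ * V = 1)
    (hSVD : H₁ᵀ * H₂ = U * D * Vᵀ)
    (W₁ : Submodule ℝ (EuclideanSpace ℝ (Fin n)))
    (hW₁ : W₁ = Submodule.span ℝ (Set.range fun j : Fin k =>
      (WithLp.toLp 2 (fun i : Fin n => H₁ i j) : EuclideanSpace ℝ (Fin n))))
    (w₁off w₂off : EuclideanSpace ℝ (Fin n)) (gbar : Fin k → ℝ)
    (w_g w_h : EuclideanSpace ℝ (Fin n))
    (hwg : w_g = (show EuclideanSpace ℝ (Fin n) from WithLp.toLp 2 ((H₂ * V).mulVec gbar)) + w₂off)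
    (hwh : w_h = (show EuclideanSpace ℝ (Fin n) from WithLp.toLp 2 ((H₁ * U * D).mulVec gbar)) +
      (Submodule.orthogonalProjectionOnto W₁ (w₂off - w₁off) : EuclideanSpace ℝ (Fin n)) + w₁off) :
    w_h ∈ (w₁off +ᵥ (W₁ : Set (EuclideanSpace ℝ (Fin n)))) ∧
      ∀ z ∈ w₁off +ᵥ (W₁ : Set (EuclideanSpace ℝ (Fin n))),
        ‖w_g - w_h‖ ≤ ‖w_g - z‖ := by
  -- columns membership
  have hcol : ∀ x : Fin k → ℝ, (show EuclideanSpace ℝ (Fin n) from WithLp.toLp 2 (H₁ *ᵥ x)) ∈ W₁ := by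
    intro x
    rw [hW₁]
    have hx : (show EuclideanSpace ℝ (Fin n) from WithLp.toLp 2 (H₁ *ᵥ x))
        = ∑ j, x j • (WithLp.toLp 2 (fun i : Fin n => H₁ i j) : EuclideanSpace ℝ (Fin n)) := by
      ext i
      simp [Matrix.mulVec, dotProduct, Finset.sum_apply, mul_comm]
    rw [hx]
    exact Submodule.sum_mem _ fun j _ => Submodule.smul_mem _ _
      (Submodule.subset_span ⟨j, rfl⟩)
  -- orthogonality of the matrix part
  have hmat : H₁ᵀ * (H₂ * V - H₁ * U * D) = 0 := by
    have h1 : H₁ᵀ * (H₂ * V) = U * D := by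
      rw [← Matrix.mul_assoc, hSVD, Matrix.mul_assoc (U*D) Vᵀ V, hV, Matrix.mul_one]
    have h2 : H₁ᵀ * (H₁ * U * D) = U * D := by
      rw [Matrix.mul_assoc H₁ U D, ← Matrix.mul_assoc H₁ᵀ H₁ (U*D), hH₁, Matrix.one_mul]
    rw [Matrix.mul_sub, h1, h2, sub_self]
  set a : EuclideanSpace ℝ (Fin n) :=
    (show EuclideanSpace ℝ (Fin n) from WithLp.toLp 2 ((H₂ * V - H₁ * U * D) *ᵥ gbar)) with ha_def
  have ha : a ∈ W₁ᗮ := by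
    rw [hW₁, Submodule.mem_orthogonal]
    intro u hu
    induction hu using Submodule.span_induction with
    | mem x hx =>
      obtain ⟨j, rfl⟩ := hx
      have h0 : (H₁ᵀ *ᵥ ((H₂ * V - H₁ * U * D) *ᵥ gbar)) j = 0 := by
        rw [Matrix.mulVec_mulVec, hmat]
        simp
      simpa [PiLp.inner_apply, RCLike.inner_apply, conj_trivial, ha_def,
        Matrix.mulVec, dotProduct, Matrix.transpose_apply, Matrix.sub_apply, mul_comm]
        using h0
    | zero => simp
    | add _ _ _ _ h1 h2 => simp [inner_add_left, h1, h2]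
    | smul _ _ _ h1 => simp [inner_smul_left, h1]
  have hb : (w₂off - w₁off) -
      (Submodule.orthogonalProjectionOnto W₁ (w₂off - w₁off) : EuclideanSpace ℝ (Fin n)) ∈ W₁ᗮ :=
    Submodule.sub_starProjection_mem_orthogonal (K := W₁) _
  have hdiff : w_g - w_h = a + ((w₂off - w₁off) -
      (Submodule.orthogonalProjectionOnto W₁ (w₂off - w₁off) : EuclideanSpace ℝ (Fin n))) := by
    rw [hwg, hwh, ha_def]
    have : (show EuclideanSpace ℝ (Fin n) from WithLp.toLp 2 ((H₂ * V - H₁ * U * D) *ᵥ gbar))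
        = (show EuclideanSpace ℝ (Fin n) from WithLp.toLp 2 ((H₂ * V) *ᵥ gbar))
          - (show EuclideanSpace ℝ (Fin n) from WithLp.toLp 2 ((H₁ * U * D) *ᵥ gbar)) := by
      simp [Matrix.sub_mulVec]
    rw [this]
    abel
  have horth : w_g - w_h ∈ W₁ᗮ := by
    rw [hdiff]; exact Submodule.add_mem _ ha hb
  have hwh_mem : w_h ∈ w₁off +ᵥ (W₁ : Set (EuclideanSpace ℝ (Fin n))) := by
    refine ⟨(show EuclideanSpace ℝ (Fin n) from WithLp.toLp 2 ((H₁ * U * D) *ᵥ gbar)) +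
      (Submodule.orthogonalProjectionOnto W₁ (w₂off - w₁off) : EuclideanSpace ℝ (Fin n)), ?_, ?_⟩
    · refine Submodule.add_mem _ ?_ (SetLike.coe_mem _)
      have : (show EuclideanSpace ℝ (Fin n) from WithLp.toLp 2 ((H₁ * U * D) *ᵥ gbar))
          = (show EuclideanSpace ℝ (Fin n) from WithLp.toLp 2 (H₁ *ᵥ ((U * D) *ᵥ gbar))) := by
        rw [Matrix.mulVec_mulVec, Matrix.mul_assoc]
      rw [this]; exact hcol _
    · rw [hwh]; simp [vadd_eq_add]; abel
  refine ⟨hwh_mem, ?_⟩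
  rintro z ⟨v, hv, rfl⟩
  have hz : w_h - (w₁off +ᵥ v) ∈ W₁ := by
    obtain ⟨u, hu, hu2⟩ := hwh_mem
    simp only [vadd_eq_add] at hu2 ⊢
    rw [← hu2]
    have heq : w₁off + u - (w₁off + v) = u - v := by abel
    rw [heq]
    exact Submodule.sub_mem _ hu hv
  have key : ‖w_g - (w₁off +ᵥ v)‖ ^ 2 = ‖w_g - w_h‖ ^ 2 + ‖w_h - (w₁off +ᵥ v)‖ ^ 2 := by
    have hsplit : w_g - (w₁off +ᵥ v) = (w_g - w_h) + (w_h - (w₁off +ᵥ v)) := by abel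
    have hz0 : inner (𝕜 := ℝ) (w_g - w_h) (w_h - (w₁off +ᵥ v)) = 0 := by
      rw [real_inner_comm]
      exact (Submodule.mem_orthogonal _ _).1 horth _ hz
    rw [hsplit, norm_add_sq_real, hz0]
    ring
  nlinarith [norm_nonneg (w_g - (w₁off +ᵥ v)), norm_nonneg (w_g - w_h),
    sq_nonneg ‖w_h - (w₁off +ᵥ v)‖]
end

section
/- Let n, k be natural numbers and let H₁, H₂ be real n×k matrices with orthonormal columns (H₁ᵀH₁ = I_k and H₂ᵀH₂ = I_k). Suppose all singular values of H₁ᵀH₂ equal 1, i.e., (H₁ᵀH₂)ᵀ(H₁ᵀH₂) = I_k. Then the subspaces of ℝ^n spanned by the columns of H₁ and of H₂ coincide: W₁ = W₂. Moreover, for any offsets w₁_off, w₂_off ∈ ℝ^n, if the affine sets w₁_off + W₁ and w₂_off + W₂ have nonempty intersection, then they are equal. That is, similar admissible behaviors whose similarity indexes are all equal to 1 are identical. -/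
open Matrix Pointwise

lemma coset_eq_of_inter_nonempty {n : ℕ} (W : Submodule ℝ (Fin n → ℝ)) (a b : Fin n → ℝ)
    (h : ((a +ᵥ (W : Set (Fin n → ℝ))) ∩ (b +ᵥ (W : Set (Fin n → ℝ)))).Nonempty) :
    a +ᵥ (W : Set (Fin n → ℝ)) = b +ᵥ (W : Set (Fin n → ℝ)) := by
  obtain ⟨x, ⟨s₁, hs₁, h1⟩, ⟨s₂, hs₂, h2⟩⟩ := h
  have key : a + s₁ = b + s₂ := h1.trans h2.symm
  have hab : b - a ∈ W := by
    have : b - a = s₁ - s₂ := by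
      funext i
      have := congrFun key i
      simp only [Pi.add_apply, Pi.sub_apply] at this ⊢
      linarith
    rw [this]; exact W.sub_mem hs₁ hs₂
  ext y
  constructor
  · rintro ⟨s, hs, rfl⟩
    exact ⟨s - (b - a), W.sub_mem hs hab, by simp only [vadd_eq_add]; abel⟩
  · rintro ⟨s, hs, rfl⟩
    exact ⟨s + (b - a), W.add_mem hs hab, by simp only [vadd_eq_add]; abel⟩

lemma factor_of_si_one (n k : ℕ) (H₁ H₂ : Matrix (Fin n) (Fin k) ℝ)
    (hH₁ : H₁ᵀ * H₁ = 1) (hH₂ : H₂ᵀ * H₂ = 1)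
    (hSI : (H₁ᵀ * H₂)ᵀ * (H₁ᵀ * H₂) = 1) : H₂ = H₁ * (H₁ᵀ * H₂) := by
  have hSI' : H₂ᵀ * (H₁ * (H₁ᵀ * H₂)) = 1 := by
    rw [← Matrix.mul_assoc]
    simpa [transpose_mul, Matrix.mul_assoc] using hSI
  have h1 : H₁ᵀ * (H₁ * (H₁ᵀ * H₂)) = H₁ᵀ * H₂ := by
    rw [← Matrix.mul_assoc, hH₁, Matrix.one_mul]
  have hM : (H₂ - H₁ * (H₁ᵀ * H₂))ᵀ * (H₂ - H₁ * (H₁ᵀ * H₂)) = 0 := by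
    simp only [transpose_sub, transpose_mul, transpose_transpose, Matrix.mul_assoc]
    rw [Matrix.sub_mul, Matrix.mul_sub, Matrix.mul_sub]
    simp only [Matrix.mul_assoc, h1, hSI', hH₂, sub_self]
  have h0 : H₂ - H₁ * (H₁ᵀ * H₂) = 0 := by
    have h2 : (H₂ - H₁ * (H₁ᵀ * H₂))ᴴ * (H₂ - H₁ * (H₁ᵀ * H₂)) = 0 := by
      rw [Matrix.conjTranspose_eq_transpose_of_trivial]; exact hM
    exact Matrix.conjTranspose_mul_self_eq_zero.mp h2
  exact sub_eq_zero.mp h0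

lemma span_le_of_factor {n k : ℕ} (H₁ H₂ : Matrix (Fin n) (Fin k) ℝ)
    (C : Matrix (Fin k) (Fin k) ℝ) (hfac : H₂ = H₁ * C) :
    Submodule.span ℝ (Set.range fun j : Fin k => fun i : Fin n => H₂ i j) ≤
      Submodule.span ℝ (Set.range fun j : Fin k => fun i : Fin n => H₁ i j) := by
  apply Submodule.span_le.mpr
  rintro _ ⟨j, rfl⟩
  have hcol : (fun i : Fin n => H₂ i j) = ∑ l : Fin k, C l j • (fun i : Fin n => H₁ i l) := by
    funext i
    rw [hfac]
    simp [Matrix.mul_apply, Finset.sum_apply, mul_comm]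
  show (fun i : Fin n => H₂ i j) ∈ _
  rw [hcol]
  exact Submodule.sum_mem _ fun l _ =>
    Submodule.smul_mem _ _ (Submodule.subset_span ⟨l, rfl⟩)

/-- If all similarity indexes (singular values of `H₁ᵀH₂`) between two admissible
behaviors equal `1`, then the column spans of `H₁` and `H₂` coincide, and any two
similar (intersecting) affine translates of them are identical. -/
theorem similarity_indexes_one_imp_identical (n k : ℕ)
    (H₁ H₂ : Matrix (Fin n) (Fin k) ℝ)
    (hH₁ : H₁ᵀ * H₁ = 1) (hH₂ : H₂ᵀ * H₂ = 1)
    (hSI : (H₁ᵀ * H₂)ᵀ * (H₁ᵀ * H₂) = 1)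
    (W₁ W₂ : Submodule ℝ (Fin n → ℝ))
    (hW₁ : W₁ = Submodule.span ℝ (Set.range fun j : Fin k => fun i : Fin n => H₁ i j))
    (hW₂ : W₂ = Submodule.span ℝ (Set.range fun j : Fin k => fun i : Fin n => H₂ i j)) :
    W₁ = W₂ ∧
      ∀ w₁off w₂off : Fin n → ℝ,
        ((w₁off +ᵥ (W₁ : Set (Fin n → ℝ))) ∩ (w₂off +ᵥ (W₂ : Set (Fin n → ℝ)))).Nonempty →
          w₁off +ᵥ (W₁ : Set (Fin n → ℝ)) = w₂off +ᵥ (W₂ : Set (Fin n → ℝ)) := by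
  have hfac : H₂ = H₁ * (H₁ᵀ * H₂) := factor_of_si_one n k H₁ H₂ hH₁ hH₂ hSI
  -- C := H₁ᵀ * H₂ is orthogonal: we also get H₁ = H₂ * (H₁ᵀ * H₂)ᵀ
  have hCC : (H₁ᵀ * H₂) * (H₁ᵀ * H₂)ᵀ = 1 := mul_eq_one_comm.mp (by
    simpa [transpose_mul, transpose_transpose, Matrix.mul_assoc] using hSI)
  have hfac' : H₁ = H₂ * (H₁ᵀ * H₂)ᵀ := by
    have h := congrArg (· * (H₁ᵀ * H₂)ᵀ) hfac
    simp only [Matrix.mul_assoc, hCC, Matrix.mul_one] at h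
    exact h.symm
  have hWeq : W₁ = W₂ := by
    rw [hW₁, hW₂]
    exact le_antisymm (span_le_of_factor H₂ H₁ _ hfac') (span_le_of_factor H₁ H₂ _ hfac)
  refine ⟨hWeq, fun w₁off w₂off hne => ?_⟩
  rw [hWeq] at hne ⊢
  exact coset_eq_of_inter_nonempty W₂ w₁off w₂off hne
end
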